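/- Coverage gap bound under non-exchangeability: let Z = (Z_1,...,Z_{n+1}) be a random sequence, Z^i the sequence with Z_i and Z_{n+1} swapped, and w_1,...,w_n ∈ [0,1] prespecified weights. For the weighted conformal prediction set Ĉ_n built with these weights, (1−α) − P(Y_{n+1} ∈ Ĉ_n(X_{n+1})) ≤ (Σ_{i=1}^n w_i · d_TV(law(Z), law(Z^i))) / (1 + Σ_{i=1}^n w_i). -/

import Mathlib

open MeasureTheory Finset

/-- Total variation distance between two measures. -/
noncomputable def tvDist {β : Type*} [MeasurableSpace β] (μ ν : Measure β) : ℝ :=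
  ⨆ s : {s : Set β // MeasurableSet s}, |(μ s.1).toReal - (ν s.1).toReal|

lemma key_pointwise {n : ℕ} {α D : ℝ} (hα : 0 < α) (hD : 0 < D)
    (W : Fin (n + 1) → ℝ) (hW : ∀ k, 0 ≤ W k) (s : Fin (n + 1) → ℝ) :
    (∑ k : Fin (n + 1),
        if (∑ j : Fin (n + 1), if s k ≤ s j then W j else 0) / D ≤ α then W k else 0)
      ≤ α * D := by
  set B : Fin (n + 1) → ℝ := fun k => (∑ j : Fin (n + 1), if s k ≤ s j then W j else 0) / D
    with hB
  show (∑ k : Fin (n + 1), if B k ≤ α then W k else 0) ≤ α * D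
  set K : Finset (Fin (n + 1)) := univ.filter fun k => B k ≤ α with hK
  rcases K.eq_empty_or_nonempty with h | h
  · have hnot : ∀ k : Fin (n + 1), ¬ (B k ≤ α) := by
      intro k hk
      have : k ∈ K := by simp [hK, hk]
      simp [h] at this
    rw [Finset.sum_eq_zero (fun k _ => by simp [hnot k])]
    positivity
  · obtain ⟨k₀, hk₀K, hk₀min⟩ := K.exists_min_image s h
    have hk₀ : B k₀ ≤ α := (mem_filter.mp hk₀K).2
    have step : (∑ k : Fin (n + 1), if B k ≤ α then W k else 0)
        ≤ ∑ j : Fin (n + 1), if s k₀ ≤ s j then W j else 0 := by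
      refine sum_le_sum fun k _ => ?_
      by_cases hk : B k ≤ α
      · have hkK : k ∈ K := mem_filter.mpr ⟨mem_univ k, hk⟩
        simp [hk, hk₀min k hkK]
      · simp only [hk, if_false]
        split
        · exact hW k
        · exact le_rfl
    have heq : (∑ j : Fin (n + 1), if s k₀ ≤ s j then W j else 0) = B k₀ * D := by
      rw [hB]; field_simp
    calc (∑ k : Fin (n + 1), if B k ≤ α then W k else 0)
        ≤ B k₀ * D := by rw [← heq]; exact step
      _ ≤ α * D := by nlinarith

/-- Conformal prediction beyond exchangeability (Barber et al.): for any data sequence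
`Z = (Z 1, ..., Z (n+1))` (not necessarily exchangeable), prespecified weights
`w i ∈ [0,1]` and a score function `S`, the coverage gap of the weighted conformal set
is bounded by `(∑ i w i · d_TV(Z, Z^i)) / (1 + ∑ i w i)`, where `Z^i` is the sequence
with the `i`-th and `(n+1)`-st points swapped. -/
theorem conformal_beyond_exchangeability_gap
    {Ω : Type*} [MeasureSpace Ω] [IsProbabilityMeasure (volume : Measure Ω)]
    {𝓧 𝓨 : Type*} [MeasurableSpace 𝓧] [MeasurableSpace 𝓨]
    (n : ℕ) (α : ℝ) (hα : α ∈ Set.Ioo (0 : ℝ) 1)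
    (Z : Fin (n + 1) → Ω → 𝓧 × 𝓨) (S : 𝓧 × 𝓨 → ℝ) (w : Fin n → ℝ)
    (hZmeas : ∀ i, Measurable (Z i)) (hSmeas : Measurable S)
    (hw : ∀ i, w i ∈ Set.Icc (0 : ℝ) 1) :
    (1 - α) -
      (volume {ω : Ω | (S (Z (Fin.last n) ω) : EReal) ≤
        sInf {t : EReal | 1 - α ≤
          (∑ i : Fin n, if (S (Z i.castSucc ω) : EReal) ≤ t then w i else 0)
              / (1 + ∑ i : Fin n, w i)
            + (if (⊤ : EReal) ≤ t then 1 / (1 + ∑ i : Fin n, w i) else 0)}}).toReal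
    ≤ (∑ i : Fin n, w i *
        tvDist (Measure.map (fun ω => fun j => Z j ω) volume)
          (Measure.map
            (fun ω => fun j => Z (Equiv.swap i.castSucc (Fin.last n) j) ω) volume))
      / (1 + ∑ i : Fin n, w i) := by
  obtain ⟨hα0, hα1⟩ := hα
  have hw0 : ∀ i, 0 ≤ w i := fun i => (hw i).1
  have hw1 : ∀ i, w i ≤ 1 := fun i => (hw i).2
  have hws : 0 ≤ ∑ i : Fin n, w i := sum_nonneg fun i _ => hw0 i
  set D : ℝ := 1 + ∑ i : Fin n, w i with hDdef
  have hD : (0:ℝ) < D := by rw [hDdef]; linarith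
  set W : Fin (n + 1) → ℝ := Fin.snoc w 1 with hWdef
  have hWnn : ∀ k, 0 ≤ W k := by
    intro k
    induction k using Fin.lastCases with
    | last => simp [hWdef]
    | cast i => simp [hWdef, hw0 i]
  -- the data maps
  have hφ : Measurable (fun ω => fun j => Z j ω : Ω → Fin (n + 1) → 𝓧 × 𝓨) :=
    measurable_pi_iff.mpr hZmeas
  have hψ : ∀ i : Fin n, Measurable
      (fun ω => fun j => Z (Equiv.swap i.castSucc (Fin.last n) j) ω : Ω → Fin (n + 1) → 𝓧 × 𝓨) :=
    fun i => measurable_pi_iff.mpr fun j => hZmeas _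
  set μ : Measure (Fin (n + 1) → 𝓧 × 𝓨) := Measure.map (fun ω => fun j => Z j ω) volume with hμ
  set ν : Fin n → Measure (Fin (n + 1) → 𝓧 × 𝓨) := fun i =>
    Measure.map (fun ω => fun j => Z (Equiv.swap i.castSucc (Fin.last n) j) ω) volume with hν
  set ε : Fin n → ℝ := fun i => tvDist μ (ν i) with hε
  haveI hμprob : IsProbabilityMeasure μ := Measure.isProbabilityMeasure_map hφ.aemeasurable
  have hνprob : ∀ i, IsProbabilityMeasure (ν i) := fun i =>
    Measure.isProbabilityMeasure_map (hψ i).aemeasurable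
  -- the bad set A
  set A : Set (Fin (n + 1) → 𝓧 × 𝓨) :=
    {z | (∑ i : Fin n, if S (z (Fin.last n)) ≤ S (z i.castSucc) then w i else 0) / D + 1 / D ≤ α}
    with hA
  have hAmeas : MeasurableSet A := by
    have hm : Measurable (fun z : Fin (n + 1) → 𝓧 × 𝓨 =>
        (∑ i : Fin n, if S (z (Fin.last n)) ≤ S (z i.castSucc) then w i else 0) / D + 1 / D) := by
      apply Measurable.add_const
      apply Measurable.div_const
      apply Finset.measurable_sum
      intro i _
      exact Measurable.ite
        (measurableSet_le (hSmeas.comp (measurable_pi_apply _))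
          (hSmeas.comp (measurable_pi_apply _)))
        measurable_const measurable_const
    exact hm measurableSet_Iic
  -- the event in the statement
  set E : Set Ω := {ω : Ω | (S (Z (Fin.last n) ω) : EReal) ≤
      sInf {t : EReal | 1 - α ≤
        (∑ i : Fin n, if (S (Z i.castSucc ω) : EReal) ≤ t then w i else 0) / D
          + (if (⊤ : EReal) ≤ t then 1 / D else 0)}} with hE
  -- non-coverage implies membership in A
  have hsub : Eᶜ ⊆ (fun ω => fun j => Z j ω) ⁻¹' A := by
    intro ω hω
    rw [hE] at hω
    simp only [Set.mem_compl_iff, Set.mem_setOf_eq, not_le] at hω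
    obtain ⟨t, ht, hts⟩ := sInf_lt_iff.mp hω
    simp only [Set.mem_setOf_eq] at ht
    have httop : ¬ ((⊤ : EReal) ≤ t) := fun h => not_top_lt (lt_of_le_of_lt h hts)
    rw [if_neg httop, add_zero] at ht
    have hsum : (∑ i : Fin n, if (S (Z i.castSucc ω) : EReal) ≤ t then w i else 0)
        ≤ ∑ i : Fin n, (w i - (if S (Z (Fin.last n) ω) ≤ S (Z i.castSucc ω) then w i else 0)) := by
      refine sum_le_sum fun i _ => ?_
      by_cases hi : (S (Z i.castSucc ω) : EReal) ≤ t
      · have hlt : S (Z i.castSucc ω) < S (Z (Fin.last n) ω) := by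
          exact_mod_cast lt_of_le_of_lt hi hts
        simp [hi, not_le.mpr hlt]
      · simp only [hi, if_false]
        split
        · linarith [hw0 i]
        · linarith [hw0 i]
    rw [Finset.sum_sub_distrib] at hsum
    show (fun ω => fun j => Z j ω) ω ∈ A
    rw [hA]
    simp only [Set.mem_setOf_eq]
    set X : ℝ := ∑ i : Fin n, if S (Z (Fin.last n) ω) ≤ S (Z i.castSucc ω) then w i else 0 with hX
    have h1 : (1 - α) * D ≤ (∑ i : Fin n, w i) - X := by
      have h1' := (le_div_iff₀ hD).mp ht
      linarith
    have h2 : X + 1 ≤ α * D := by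
      rw [hDdef] at h1; nlinarith
    rw [← add_div, div_le_iff₀ hD]
    exact h2
  -- the "strange point" sets
  set G : Fin (n + 1) → Set Ω := fun k =>
    {ω | (∑ j : Fin (n + 1), if S (Z k ω) ≤ S (Z j ω) then W j else 0) / D ≤ α} with hG
  have hGmeas : ∀ k, MeasurableSet (G k) := by
    intro k
    have hm : Measurable (fun ω : Ω =>
        (∑ j : Fin (n + 1), if S (Z k ω) ≤ S (Z j ω) then W j else 0) / D) := by
      apply Measurable.div_const
      apply Finset.measurable_sum
      intro j _
      exact Measurable.ite
        (measurableSet_le (hSmeas.comp (hZmeas k)) (hSmeas.comp (hZmeas j)))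
        measurable_const measurable_const
    exact hm measurableSet_Iic
  -- the last one is exactly A
  have hGlast : (fun ω => fun j => Z j ω) ⁻¹' A = G (Fin.last n) := by
    ext ω
    rw [hA, hG]
    simp only [Set.mem_preimage, Set.mem_setOf_eq]
    rw [Fin.sum_univ_castSucc]
    simp only [hWdef, Fin.snoc_last, Fin.snoc_castSucc, le_refl, if_true]
    rw [← add_div]
  -- the swapped preimages are inside the corresponding strange sets
  have hGsub : ∀ i : Fin n,
      (fun ω => fun j => Z (Equiv.swap i.castSucc (Fin.last n) j) ω) ⁻¹' A ⊆ G i.castSucc := by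
    intro i ω hω
    rw [hA] at hω
    simp only [Set.mem_preimage, Set.mem_setOf_eq] at hω
    simp only [Equiv.swap_apply_right] at hω
    rw [hG]
    simp only [Set.mem_setOf_eq]
    -- abbreviations
    set a : ℝ := S (Z i.castSucc ω) with ha
    -- compute the sum over Fin (n+1)
    rw [Fin.sum_univ_castSucc]
    simp only [hWdef, Fin.snoc_last, Fin.snoc_castSucc]
    -- split sums at i
    have hsplit1 : (∑ j : Fin n, if a ≤ S (Z j.castSucc ω) then w j else 0)
        = (∑ j ∈ univ.erase i, if a ≤ S (Z j.castSucc ω) then w j else 0) + w i := by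
      rw [← Finset.sum_erase_add _ _ (mem_univ i)]
      simp [ha]
    have hsplit2 : (∑ j : Fin n,
          if a ≤ S (Z (Equiv.swap i.castSucc (Fin.last n) j.castSucc) ω) then w j else 0)
        = (∑ j ∈ univ.erase i, if a ≤ S (Z j.castSucc ω) then w j else 0)
          + (if a ≤ S (Z (Fin.last n) ω) then w i else 0) := by
      rw [← Finset.sum_erase_add _ _ (mem_univ i)]
      congr 1
      · refine Finset.sum_congr rfl fun j hj => ?_
        have hji : j ≠ i := (Finset.mem_erase.mp hj).1
        rw [Equiv.swap_apply_of_ne_of_ne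
          (by simpa [Fin.castSucc_inj] using hji)
          (Fin.castSucc_lt_last j).ne]
      · rw [Equiv.swap_apply_left]
    rw [hsplit2] at hω
    rw [hsplit1]
    set T : ℝ := ∑ j ∈ univ.erase i, if a ≤ S (Z j.castSucc ω) then w j else 0 with hT
    rw [← add_div, div_le_iff₀ hD] at hω
    rw [div_le_iff₀ hD]
    rcases le_or_gt a (S (Z (Fin.last n) ω)) with hc | hc
    · simp only [if_pos hc] at hω ⊢
      linarith
    · simp only [if_neg (not_le.mpr hc)] at hω ⊢
      linarith [hw1 i]
  -- integral step
  have hGint : ∀ k : Fin (n + 1), Integrable ((G k).indicator fun _ => (1 : ℝ)) volume := fun k =>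
    (integrable_indicator_iff (hGmeas k)).2 (integrableOn_const (measure_ne_top _ _))
  have hint : ∀ k : Fin (n + 1),
      (∫ ω, (G k).indicator (fun _ => (1 : ℝ)) ω) = (volume (G k)).toReal := by
    intro k
    rw [integral_indicator_const (1 : ℝ) (hGmeas k), smul_eq_mul, mul_one]
    rfl
  have hpoint : ∀ ω : Ω,
      (∑ k : Fin (n + 1), W k * (G k).indicator (fun _ => (1 : ℝ)) ω) ≤ α * D := by
    intro ω
    refine le_trans (le_of_eq ?_) (key_pointwise hα0 hD W hWnn (fun j => S (Z j ω)))
    refine Finset.sum_congr rfl fun k _ => ?_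
    by_cases hk : ω ∈ G k
    · have hk' : (∑ j : Fin (n + 1), if S (Z k ω) ≤ S (Z j ω) then W j else 0) / D ≤ α := hk
      rw [Set.indicator_of_mem hk, if_pos hk', mul_one]
    · have hk' : ¬ ((∑ j : Fin (n + 1), if S (Z k ω) ≤ S (Z j ω) then W j else 0) / D ≤ α) := hk
      rw [Set.indicator_of_notMem hk, if_neg hk', mul_zero]
  have hd : (∑ k : Fin (n + 1), W k * (volume (G k)).toReal) ≤ α * D := by
    have hmono : (∫ ω, ∑ k : Fin (n + 1), W k * (G k).indicator (fun _ => (1 : ℝ)) ω)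
        ≤ ∫ _ω : Ω, α * D :=
      integral_mono (integrable_finset_sum _ fun k _ => (hGint k).const_mul _)
        (integrable_const _) hpoint
    rw [integral_const, probReal_univ, one_smul] at hmono
    rw [integral_finset_sum _ fun k _ => (hGint k).const_mul _] at hmono
    calc (∑ k : Fin (n + 1), W k * (volume (G k)).toReal)
        = ∑ k : Fin (n + 1), ∫ ω, W k * (G k).indicator (fun _ => (1 : ℝ)) ω := by
          refine Finset.sum_congr rfl fun k _ => ?_
          rw [MeasureTheory.integral_const_mul, hint k]
      _ ≤ α * D := hmono
  have hd2 : (∑ i : Fin n, w i * (volume (G i.castSucc)).toReal)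
      + (volume (G (Fin.last n))).toReal ≤ α * D := by
    rw [Fin.sum_univ_castSucc] at hd
    simpa only [hWdef, Fin.snoc_last, Fin.snoc_castSucc, one_mul] using hd
  -- probabilistic facts
  have hμA : (μ A).toReal = (volume (G (Fin.last n))).toReal := by
    rw [hμ, Measure.map_apply hφ hAmeas, hGlast]
  have hνA : ∀ i : Fin n, ((ν i) A).toReal ≤ (volume (G i.castSucc)).toReal := by
    intro i
    have : (ν i) A = volume
        ((fun ω => fun j => Z (Equiv.swap i.castSucc (Fin.last n) j) ω) ⁻¹' A) := by
      rw [hν]; exact Measure.map_apply (hψ i) hAmeas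
    rw [this]
    exact ENNReal.toReal_mono (measure_ne_top _ _) (measure_mono (hGsub i))
  have hTV : ∀ i : Fin n, (μ A).toReal - ((ν i) A).toReal ≤ ε i := by
    intro i
    haveI := hνprob i
    have hbdd : BddAbove (Set.range fun s : {s : Set (Fin (n + 1) → 𝓧 × 𝓨) // MeasurableSet s} =>
        |(μ s.1).toReal - ((ν i) s.1).toReal|) := by
      refine ⟨1, ?_⟩
      rintro x ⟨s, rfl⟩
      have h1 : (μ s.1).toReal ≤ 1 := by
        have := ENNReal.toReal_mono ENNReal.one_ne_top (prob_le_one (μ := μ) (s := s.1))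
        simpa using this
      have h2 : ((ν i) s.1).toReal ≤ 1 := by
        have := ENNReal.toReal_mono ENNReal.one_ne_top (prob_le_one (μ := ν i) (s := s.1))
        simpa using this
      have h3 : 0 ≤ (μ s.1).toReal := ENNReal.toReal_nonneg
      have h4 : 0 ≤ ((ν i) s.1).toReal := ENNReal.toReal_nonneg
      rw [abs_le]; constructor <;> linarith
    calc (μ A).toReal - ((ν i) A).toReal
        ≤ |(μ A).toReal - ((ν i) A).toReal| := le_abs_self _
      _ ≤ tvDist μ (ν i) :=
          le_ciSup hbdd (⟨A, hAmeas⟩ : {s : Set (Fin (n + 1) → 𝓧 × 𝓨) // MeasurableSet s})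
      _ = ε i := rfl
  -- coverage complement bound
  have hEA : (1 : ℝ) ≤ (volume E).toReal + (μ A).toReal := by
    have h0 : (volume (Set.univ : Set Ω)) ≤
        volume E + volume ((fun ω => fun j => Z j ω) ⁻¹' A) := by
      calc volume (Set.univ : Set Ω) = volume (E ∪ Eᶜ) := by rw [Set.union_compl_self]
        _ ≤ volume E + volume Eᶜ := measure_union_le _ _
        _ ≤ volume E + volume ((fun ω => fun j => Z j ω) ⁻¹' A) :=
            add_le_add_right (measure_mono hsub) _
    rw [measure_univ] at h0
    have hne1 : volume E ≠ ⊤ := measure_ne_top _ _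
    have hne2 : volume ((fun ω => fun j => Z j ω) ⁻¹' A) ≠ ⊤ := measure_ne_top _ _
    have h1 := ENNReal.toReal_mono (ENNReal.add_ne_top.mpr ⟨hne1, hne2⟩) h0
    rw [ENNReal.toReal_one, ENNReal.toReal_add hne1 hne2] at h1
    have hμA' : (μ A).toReal = (volume ((fun ω => fun j => Z j ω) ⁻¹' A)).toReal := by
      rw [hμ, Measure.map_apply hφ hAmeas]
    rw [hμA']
    exact h1
  -- final algebra
  have hchain : ∀ i : Fin n, (μ A).toReal ≤ (volume (G i.castSucc)).toReal + ε i := by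
    intro i; have h1 := hTV i; have h2 := hνA i; linarith
  have hsum1 : (∑ i : Fin n, w i) * (μ A).toReal
      ≤ (∑ i : Fin n, w i * (volume (G i.castSucc)).toReal) + ∑ i : Fin n, w i * ε i := by
    rw [Finset.sum_mul, ← Finset.sum_add_distrib]
    refine Finset.sum_le_sum fun i _ => ?_
    calc w i * (μ A).toReal ≤ w i * ((volume (G i.castSucc)).toReal + ε i) :=
          mul_le_mul_of_nonneg_left (hchain i) (hw0 i)
      _ = w i * (volume (G i.castSucc)).toReal + w i * ε i := by ring
  have hfinal : (1 - α) - (volume E).toReal ≤ (∑ i : Fin n, w i * ε i) / D := by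
    rw [le_div_iff₀ hD]
    have hDa : ((1 - α) - (volume E).toReal) * D ≤ ((μ A).toReal - α) * D := by
      apply mul_le_mul_of_nonneg_right _ hD.le
      linarith
    have hexp : ((μ A).toReal - α) * D
        = (∑ i : Fin n, w i) * (μ A).toReal + (μ A).toReal - α * D := by
      rw [hDdef]; ring
    linarith [hsum1, hd2, hμA, hDa, hexp]
  exact hfinal
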